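/- (Cumulative monotone trends suffice.) Fix t ≥ 2 and suppose the cumulative monotone trends condition holds: ∑_{s=2}^{t} min{Δ_s(a), Δ_s(b)} ≤ ∑_{s=2}^{t} Δ_s(trt) ≤ ∑_{s=2}^{t} max{Δ_s(a), Δ_s(b)}, and A_1 = 0. Then the bracketing bounds remain valid: ∑_{s=2}^{t} min{τ_s(a), τ_s(b)} ≤ A_t ≤ ∑_{s=2}^{t} max{τ_s(a), τ_s(b)}. -/
import Mathlib

lemma telescope_Icc (f : ℕ → ℝ) : ∀ t, 1 ≤ t →
    (∑ s ∈ Finset.Icc 2 t, (f s - f (s - 1))) = f t - f 1 := by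
  intro t
  induction t with
  | zero => omega
  | succ n ih =>
    intro _
    rcases Nat.lt_or_ge n 1 with h | h
    · interval_cases n
      · simp
    · rw [show n + 1 = n + 1 from rfl, Finset.sum_Icc_succ_top (by omega), ih h]
      simp only [Nat.add_sub_cancel]
      ring

/-- Cumulative monotone trends suffice: if only the cumulative version
of the monotone trends condition holds, i.e.
`∑_{s=2}^t min{Δ_s(a), Δ_s(b)} ≤ ∑_{s=2}^t Δ_s(trt) ≤ ∑_{s=2}^t max{Δ_s(a), Δ_s(b)}`,
and `A 1 = 0`, the bracketing bounds on `A_t` remain valid. -/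
theorem did_bracketing_cumulative_monotone_trends
    (μa μb μc A : ℕ → ℝ) (t : ℕ) (ht : 2 ≤ t) (hA1 : A 1 = 0)
    (hcum_lower : (∑ s ∈ Finset.Icc 2 t,
        min (μa s - μa (s - 1)) (μb s - μb (s - 1))) ≤
      ∑ s ∈ Finset.Icc 2 t, (μc s - μc (s - 1)))
    (hcum_upper : (∑ s ∈ Finset.Icc 2 t, (μc s - μc (s - 1))) ≤
      ∑ s ∈ Finset.Icc 2 t, max (μa s - μa (s - 1)) (μb s - μb (s - 1))) :
    (∑ s ∈ Finset.Icc 2 t,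
        min ((A s - A (s - 1)) + (μc s - μc (s - 1)) - (μa s - μa (s - 1)))
            ((A s - A (s - 1)) + (μc s - μc (s - 1)) - (μb s - μb (s - 1)))) ≤ A t ∧
    A t ≤ (∑ s ∈ Finset.Icc 2 t,
        max ((A s - A (s - 1)) + (μc s - μc (s - 1)) - (μa s - μa (s - 1)))
            ((A s - A (s - 1)) + (μc s - μc (s - 1)) - (μb s - μb (s - 1)))) := by
  have hmin : (∑ s ∈ Finset.Icc 2 t,
        min ((A s - A (s - 1)) + (μc s - μc (s - 1)) - (μa s - μa (s - 1)))
            ((A s - A (s - 1)) + (μc s - μc (s - 1)) - (μb s - μb (s - 1))))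
      = (∑ s ∈ Finset.Icc 2 t, (A s - A (s - 1)))
        + (∑ s ∈ Finset.Icc 2 t, (μc s - μc (s - 1)))
        - ∑ s ∈ Finset.Icc 2 t, max (μa s - μa (s - 1)) (μb s - μb (s - 1)) := by
    rw [← Finset.sum_add_distrib, ← Finset.sum_sub_distrib]
    exact Finset.sum_congr rfl fun s _ => min_sub_sub_left _ _ _
  have hmax : (∑ s ∈ Finset.Icc 2 t,
        max ((A s - A (s - 1)) + (μc s - μc (s - 1)) - (μa s - μa (s - 1)))
            ((A s - A (s - 1)) + (μc s - μc (s - 1)) - (μb s - μb (s - 1))))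
      = (∑ s ∈ Finset.Icc 2 t, (A s - A (s - 1)))
        + (∑ s ∈ Finset.Icc 2 t, (μc s - μc (s - 1)))
        - ∑ s ∈ Finset.Icc 2 t, min (μa s - μa (s - 1)) (μb s - μb (s - 1)) := by
    rw [← Finset.sum_add_distrib, ← Finset.sum_sub_distrib]
    exact Finset.sum_congr rfl fun s _ => max_sub_sub_left _ _ _
  have hA : (∑ s ∈ Finset.Icc 2 t, (A s - A (s - 1))) = A t := by
    rw [telescope_Icc A t (by omega), hA1, sub_zero]
  rw [hmin, hmax, hA]
  constructor <;> linarith
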